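/- Let g be a filiform Lie algebra of dimension n ≥ 5 whose derived algebra D g = [g,g] is abelian. Then there exist a basis {x_1,…,x_n} of g and complex numbers λ_0,…,λ_{n-5} such that [x_1, x_i] = x_{i+1} for 2 ≤ i ≤ n−1, [x_i, x_j] = 0 for 3 ≤ i < j ≤ n, and [x_2, x_i] = Σ_{r=0}^{n-i-2} λ_r x_{i+2+r} for 3 ≤ i ≤ n−2. -/

import Mathlib

/-- A complex Lie algebra `L` of dimension `n` is filiform if its lower central series
`C^1 g = g`, `C^k g = ⁅C^{k-1} g, g⁆` (here `C^k g = LieModule.lowerCentralSeries ℂ L L (k-1)`)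
satisfies `dim C^k g = n - k` for all `2 ≤ k ≤ n`. -/
def IsFiliform (L : Type*) [LieRing L] [LieAlgebra ℂ L] (n : ℕ) : Prop :=
  Module.finrank ℂ L = n ∧
    ∀ k : ℕ, 2 ≤ k → k ≤ n →
      Module.finrank ℂ (LieModule.lowerCentralSeries ℂ L L (k - 1)) = n - k

section BratAux

variable {L : Type*} [LieRing L] [LieAlgebra ℂ L]

/-- The auxiliary sequence `x₁, x₂, x₃ = ⁅x₁,x₂⁆, x₄ = ⁅x₁,x₃⁆, …`. -/
def bratSeq (x1 x2 : L) : ℕ → L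
  | 0 => 0
  | 1 => x1
  | 2 => x2
  | (k + 3) => ⁅x1, bratSeq x1 x2 (k + 2)⁆

lemma bratSeq_succ (x1 x2 : L) : ∀ k, 2 ≤ k →
    bratSeq x1 x2 (k + 1) = ⁅x1, bratSeq x1 x2 k⁆
  | (k + 2), _ => rfl

end BratAux

theorem bratzlavsky_normal_form
    (n : ℕ) (L : Type*) [LieRing L] [LieAlgebra ℂ L] (hn : 5 ≤ n)
    (hfil : IsFiliform L n) (hmeta : LieAlgebra.derivedSeries ℂ L 2 = ⊥) :
    ∃ (x : ℕ → L) (lam : ℕ → ℂ),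
      (LinearIndependent ℂ fun i : Fin n => x (i.1 + 1)) ∧
      (Submodule.span ℂ (Set.range fun i : Fin n => x (i.1 + 1)) = ⊤) ∧
      (∀ i, 2 ≤ i → i ≤ n - 1 → ⁅x 1, x i⁆ = x (i + 1)) ∧
      (∀ i j, 3 ≤ i → i < j → j ≤ n → ⁅x i, x j⁆ = 0) ∧
      (∀ i, 3 ≤ i → i ≤ n - 2 →
        ⁅x 2, x i⁆ = ∑ r ∈ Finset.range (n - i - 1), lam r • x (i + 2 + r)) := by
  classical
  set C : ℕ → LieSubmodule ℂ L L := fun k => LieModule.lowerCentralSeries ℂ L L k with hCdef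
  haveI hfinL : FiniteDimensional ℂ L :=
    Module.finite_of_finrank_pos (by rw [hfil.1]; omega)
  have hC0 : C 0 = ⊤ := rfl
  have hCsucc : ∀ k, C (k + 1) = ⁅(⊤ : LieIdeal ℂ L), C k⁆ := fun k =>
    LieModule.lowerCentralSeries_succ ℂ L L k
  have hCanti : ∀ {j k : ℕ}, j ≤ k → C k ≤ C j := fun {j k} h =>
    LieModule.antitone_lowerCentralSeries ℂ L L h
  have hCanti' : ∀ {j k : ℕ}, j ≤ k → (C k : Submodule ℂ L) ≤ (C j : Submodule ℂ L) :=
    fun {j k} h => by exact_mod_cast hCanti h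
  have hdim : ∀ j, 1 ≤ j → j ≤ n - 1 →
      Module.finrank ℂ (C j : Submodule ℂ L) = n - 1 - j := by
    intro j h1 h2
    have := hfil.2 (j + 1) (by omega) (by omega)
    simp [hCdef, Nat.add_sub_cancel, show n - (j + 1) = n - 1 - j by omega] at this
    exact this
  have hCbot : ∀ k, n - 1 ≤ k → C k = ⊥ := by
    intro k hk
    have h1 : C k ≤ C (n - 1) := hCanti hk
    have h2 : C (n - 1) = ⊥ := by
      rw [← LieSubmodule.toSubmodule_inj]
      have := hdim (n - 1) (by omega) le_rfl
      rw [show n - 1 - (n - 1) = 0 by omega] at this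
      simpa using Submodule.finrank_eq_zero.mp this
    exact le_bot_iff.mp (h2 ▸ h1)
  have habD : ∀ x y : L, x ∈ C 1 → y ∈ C 1 → ⁅x, y⁆ = 0 := by
    intro x y hx hy
    have hDS : LieAlgebra.derivedSeries ℂ L 2 =
        ⁅LieAlgebra.derivedSeries ℂ L 1, LieAlgebra.derivedSeries ℂ L 1⁆ := by
      rw [LieAlgebra.derivedSeries_def, LieAlgebra.derivedSeriesOfIdeal_succ,
        ← LieAlgebra.derivedSeries_def]
    have h1 : LieAlgebra.derivedSeries ℂ L 1 = C 1 := rfl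
    have : ⁅x, y⁆ ∈ LieAlgebra.derivedSeries ℂ L 2 := by
      rw [hDS, h1]
      exact LieSubmodule.lie_mem_lie hx hy
    rw [hmeta] at this
    exact (LieSubmodule.mem_bot _).mp this
  have hlieMem : ∀ (z : L) (k : ℕ) (m : L), m ∈ C k → ⁅z, m⁆ ∈ C (k + 1) := by
    intro z k m hm
    rw [hCsucc]
    exact LieSubmodule.lie_mem_lie (LieSubmodule.mem_top z) hm
  -- generic element avoiding the "bad" subspaces
  have hexists : ∃ z : L, ∀ k, k ≤ n - 3 → ¬ (∀ m ∈ C k, ⁅z, m⁆ ∈ C (k + 2)) := by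
    let p : Fin (n - 2) → Submodule ℂ L := fun i =>
      { carrier := {z | ∀ m ∈ C i.1, ⁅z, m⁆ ∈ C (i.1 + 2)}
        add_mem' := fun {a b} ha hb m hm => by
          rw [add_lie]; exact (C (i.1 + 2)).add_mem (ha m hm) (hb m hm)
        zero_mem' := fun m hm => by
          rw [zero_lie]; exact (C (i.1 + 2)).zero_mem
        smul_mem' := fun t {z} hz m hm => by
          rw [smul_lie]; exact (C (i.1 + 2)).smul_mem t (hz m hm) }
    have hne : ∀ i, p i ≠ ⊤ := by
      intro i heq
      have hle : C (i.1 + 1) ≤ C (i.1 + 2) := by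
        rw [hCsucc, LieSubmodule.lie_le_iff]
        intro xx _ m hm
        have hz : xx ∈ p i := by rw [heq]; trivial
        exact hz m hm
      have h1 := hdim (i.1 + 1) (by omega) (by omega)
      have h2 := hdim (i.1 + 2) (by omega) (by omega)
      have h3 := Submodule.finrank_mono (hCanti' (le_refl (i.1 + 1)) |>.trans_eq rfl)
      have h4 : Module.finrank ℂ (C (i.1 + 1) : Submodule ℂ L) ≤
          Module.finrank ℂ (C (i.1 + 2) : Submodule ℂ L) :=
        Submodule.finrank_mono (by exact_mod_cast hle)
      have hi2 := i.2
      omega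
    have hcov : (⋃ i, ((p i : Set L))) ≠ Set.univ := by
      intro h
      obtain ⟨i, hi⟩ := Subspace.exists_eq_top_of_iUnion_eq_univ h
      exact hne i hi
    obtain ⟨z, hz⟩ := (Set.ne_univ_iff_exists_notMem _).mp hcov
    exact ⟨z, fun k hk hall => hz (Set.mem_iUnion.mpr ⟨⟨k, by omega⟩, hall⟩)⟩
  obtain ⟨x1, hx1⟩ := hexists
  have hx1' : ∀ k, k ≤ n - 3 → ∃ m ∈ C k, ⁅x1, m⁆ ∉ C (k + 2) := by
    intro k hk
    have := hx1 k hk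
    push_neg at this
    exact this
  set f : L →ₗ[ℂ] L := LieAlgebra.ad ℂ L x1 with hfdef
  have hfapp : ∀ m : L, f m = ⁅x1, m⁆ := fun m => rfl
  have hmaple : ∀ k, Submodule.map f (C k : Submodule ℂ L) ≤ (C (k + 1) : Submodule ℂ L) := by
    rintro k _ ⟨m, hm, rfl⟩
    exact hlieMem x1 k m hm
  have hEk : ∀ k, k ≤ n - 3 →
      Submodule.map f (C k : Submodule ℂ L) ⊔ (C (k + 2) : Submodule ℂ L)
        = (C (k + 1) : Submodule ℂ L) := by
    intro k hk
    have hle1 : Submodule.map f (C k : Submodule ℂ L) ⊔ (C (k + 2) : Submodule ℂ L)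
        ≤ (C (k + 1) : Submodule ℂ L) := sup_le (hmaple k) (hCanti' (by omega))
    obtain ⟨m, hm, hnm⟩ := hx1' k hk
    have hlt : (C (k + 2) : Submodule ℂ L) <
        Submodule.map f (C k : Submodule ℂ L) ⊔ (C (k + 2) : Submodule ℂ L) := by
      refine lt_of_le_of_ne le_sup_right fun hEq => hnm ?_
      have hmem : ⁅x1, m⁆ ∈ Submodule.map f (C k : Submodule ℂ L) ⊔ (C (k + 2) : Submodule ℂ L) :=
        Submodule.mem_sup_left (Submodule.mem_map_of_mem hm)
      rw [← hEq] at hmem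
      exact hmem
    have h1 := hdim (k + 1) (by omega) (by omega)
    have h2 := hdim (k + 2) (by omega) (by omega)
    have h3 := Submodule.finrank_lt_finrank_of_lt hlt
    exact Submodule.eq_of_le_of_finrank_le hle1 (by omega)
  have hsurjAux : ∀ j k, 1 ≤ k → n - 1 - k ≤ j →
      Submodule.map f (C k : Submodule ℂ L) = (C (k + 1) : Submodule ℂ L) := by
    intro j
    induction j with
    | zero =>
      intro k _ hk2
      rw [hCbot k (by omega), hCbot (k + 1) (by omega)]
      simp
    | succ j ih =>
      intro k hk1 hk2
      by_cases h : n - 1 - k ≤ j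
      · exact ih k hk1 h
      · by_cases h2 : n - 2 ≤ k
        · refine le_antisymm (hmaple k) ?_
          rw [hCbot (k + 1) (by omega)]
          simp
        · have h3 := ih (k + 1) (by omega) (by omega)
          have h4 : (C (k + 2) : Submodule ℂ L) ≤ Submodule.map f (C k : Submodule ℂ L) := by
            rw [← h3]
            exact Submodule.map_mono (hCanti' (by omega))
          rw [← hEk k (by omega)]
          exact (sup_eq_left.mpr h4).symm
  have hsurj : ∀ k, 1 ≤ k →
      Submodule.map f (C k : Submodule ℂ L) = (C (k + 1) : Submodule ℂ L) :=
    fun k hk => hsurjAux (n - 1 - k) k hk le_rfl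
  -- choose x2₀
  obtain ⟨x20, -, h3n⟩ := hx1' 0 (by omega)
  set y : ℕ → L := bratSeq x1 x20 with hydef
  have hysucc : ∀ k, 2 ≤ k → y (k + 1) = ⁅x1, y k⁆ := bratSeq_succ x1 x20
  have hy3 : y 3 = ⁅x1, x20⁆ := rfl
  have hymem : ∀ j, y (j + 3) ∈ C (j + 1) := by
    intro j
    induction j with
    | zero => exact hlieMem x1 0 x20 trivial
    | succ j ih =>
      have : y (j + 1 + 3) = ⁅x1, y (j + 3)⁆ := hysucc (j + 3) (by omega)
      rw [this]
      exact hlieMem x1 (j + 1) _ ih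
  have hymemC1 : ∀ k, 3 ≤ k → y k ∈ C 1 := by
    intro k hk
    obtain ⟨j, rfl⟩ : ∃ j, k = j + 3 := ⟨k - 3, by omega⟩
    exact hCanti (by omega) (hymem j)
  have hyidx : ∀ a b : ℕ, a = b → y a = y b := fun a b h => by rw [h]
  -- the chain decomposition
  have hH : ∀ j, (C (j + 1) : Submodule ℂ L)
      = Submodule.span ℂ {y (j + 3)} ⊔ (C (j + 2) : Submodule ℂ L) := by
    intro j
    induction j with
    | zero =>
      have hle : Submodule.span ℂ {y 3} ⊔ (C 2 : Submodule ℂ L) ≤ (C 1 : Submodule ℂ L) := by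
        refine sup_le ?_ (hCanti' (by omega))
        rw [Submodule.span_singleton_le_iff_mem]
        exact hymem 0
      have hlt : (C 2 : Submodule ℂ L) < Submodule.span ℂ {y 3} ⊔ (C 2 : Submodule ℂ L) := by
        refine lt_of_le_of_ne le_sup_right fun hEq => h3n ?_
        have : y 3 ∈ Submodule.span ℂ {y 3} ⊔ (C 2 : Submodule ℂ L) :=
          Submodule.mem_sup_left (Submodule.mem_span_singleton_self _)
        rw [← hEq] at this
        exact this
      have h1 := hdim 1 (by omega) (by omega)
      have h2 := hdim 2 (by omega) (by omega)
      have h3 := Submodule.finrank_lt_finrank_of_lt hlt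
      exact (Submodule.eq_of_le_of_finrank_le hle (by omega)).symm
    | succ j ih =>
      have e1 : (C (j + 2) : Submodule ℂ L) = Submodule.map f (C (j + 1) : Submodule ℂ L) :=
        (hsurj (j + 1) (by omega)).symm
      rw [show j + 1 + 1 = j + 2 by omega, e1, ih, Submodule.map_sup, Submodule.map_span,
        Set.image_singleton, hsurj (j + 2) (by omega), hfapp,
        show j + 1 + 3 = (j + 3) + 1 by omega, hysucc (j + 3) (by omega),
        show j + 1 + 2 = j + 3 by omega]
  have hynot : ∀ j, j ≤ n - 3 → y (j + 3) ∉ C (j + 2) := by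
    intro j hj hmem
    have heq : (C (j + 1) : Submodule ℂ L) = (C (j + 2) : Submodule ℂ L) := by
      rw [hH j]
      exact sup_eq_right.mpr (Submodule.span_singleton_le_iff_mem _ _ |>.mpr hmem)
    have e1 := hdim (j + 1) (by omega) (by omega)
    have e2 := hdim (j + 2) (by omega) (by omega)
    rw [heq] at e1
    omega
  have hx1notC1 : x1 ∉ C 1 := by
    intro hmem
    obtain ⟨m, hm, hnm⟩ := hx1' 1 (by omega)
    exact hnm (by rw [habD x1 m hmem (hCanti (by omega) hm)]; exact (C 3).zero_mem)
  have hx2not : x20 ∉ Submodule.span ℂ {x1} ⊔ (C 1 : Submodule ℂ L) := by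
    intro hmem
    obtain ⟨a, ha, d, hd, hsum⟩ := Submodule.mem_sup.mp hmem
    obtain ⟨t, rfl⟩ := Submodule.mem_span_singleton.mp ha
    have he : y 3 = ⁅x1, d⁆ := by
      rw [hy3, ← hsum, lie_add, lie_smul, lie_self, smul_zero, zero_add]
    exact h3n (by rw [← hy3, he]; exact hlieMem x1 1 d hd)
  have htop : (⊤ : Submodule ℂ L)
      = Submodule.span ℂ {x1} ⊔ (Submodule.span ℂ {x20} ⊔ (C 1 : Submodule ℂ L)) := by
    have hlt1 : (C 1 : Submodule ℂ L) < Submodule.span ℂ {x1} ⊔ (C 1 : Submodule ℂ L) := by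
      refine lt_of_le_of_ne le_sup_right fun hEq => hx1notC1 ?_
      have : x1 ∈ Submodule.span ℂ {x1} ⊔ (C 1 : Submodule ℂ L) :=
        Submodule.mem_sup_left (Submodule.mem_span_singleton_self _)
      rw [← hEq] at this
      exact this
    have hlt2 : Submodule.span ℂ {x1} ⊔ (C 1 : Submodule ℂ L)
        < Submodule.span ℂ {x1} ⊔ (Submodule.span ℂ {x20} ⊔ (C 1 : Submodule ℂ L)) := by
      refine lt_of_le_of_ne (sup_le le_sup_left (le_sup_of_le_right le_sup_right))
        fun hEq => hx2not ?_
      have : x20 ∈ Submodule.span ℂ {x1} ⊔ (Submodule.span ℂ {x20} ⊔ (C 1 : Submodule ℂ L)) :=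
        Submodule.mem_sup_right (Submodule.mem_sup_left (Submodule.mem_span_singleton_self _))
      rw [← hEq] at this
      exact this
    have h1 := hdim 1 (by omega) (by omega)
    have h2 := Submodule.finrank_lt_finrank_of_lt hlt1
    have h3 := Submodule.finrank_lt_finrank_of_lt hlt2
    have h4 : Module.finrank ℂ (⊤ : Submodule ℂ L) = n := by
      rw [finrank_top]; exact hfil.1
    exact (Submodule.eq_of_le_of_finrank_le le_top (by omega)).symm
  -- span of C 2 by the tail family
  have hCspanAux : ∀ j k, 2 ≤ k → n - 1 - k ≤ j →
      (C k : Submodule ℂ L) ≤ Submodule.span ℂ (Set.range fun i : Fin (n - 3) => y (i.1 + 4)) := by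
    intro j
    induction j with
    | zero =>
      intro k _ hk2
      rw [hCbot k (by omega)]
      simp
    | succ j ih =>
      intro k hk2 hk
      by_cases hbig : n - 1 ≤ k
      · rw [hCbot k hbig]; simp
      · obtain ⟨k', rfl⟩ : ∃ k', k = k' + 2 := ⟨k - 2, by omega⟩
        have hHk := hH (k' + 1)
        rw [show k' + 1 + 1 = k' + 2 by omega] at hHk
        rw [hHk]
        refine sup_le ?_ ?_
        · rw [Submodule.span_singleton_le_iff_mem]
          exact Submodule.subset_span ⟨⟨k', by omega⟩, congrArg y (show k' + 4 = k' + 1 + 3 by omega)⟩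
        · have := ih (k' + 3) (by omega) (by omega)
          rw [show k' + 1 + 2 = k' + 3 by omega]
          exact this
  have hC2span : (C 2 : Submodule ℂ L)
      ≤ Submodule.span ℂ (Set.range fun i : Fin (n - 3) => y (i.1 + 4)) :=
    hCspanAux (n - 3) 2 le_rfl (by omega)
  have hv : ⁅x20, y 3⁆ ∈ C 2 := hlieMem x20 1 (y 3) (hymem 0)
  obtain ⟨c, hc⟩ : ∃ c : Fin (n - 3) → ℂ, ∑ i, c i • y (i.1 + 4) = ⁅x20, y 3⁆ :=
    (Submodule.mem_span_range_iff_exists_fun ℂ).mp (hC2span hv)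
  set cc : ℕ → ℂ := fun j => if h : j < n - 3 then c ⟨j, h⟩ else 0 with hccdef
  have hccsum : ∑ j ∈ Finset.range (n - 3), cc j • y (j + 4) = ⁅x20, y 3⁆ := by
    rw [← hc, ← Fin.sum_univ_eq_sum_range (fun j => cc j • y (j + 4)) (n - 3)]
    refine Finset.sum_congr rfl fun i _ => ?_
    rw [hccdef]
    simp only [i.2, dif_pos]
  set x2 : L := x20 - cc 0 • x1 with hx2def
  set lam : ℕ → ℂ := fun r => cc (r + 1) with hlamdef
  set x : ℕ → L := fun k => if k = 2 then x2 else y k with hxdef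
  have hxy : ∀ k, k ≠ 2 → x k = y k := fun k hk => by rw [hxdef]; simp [hk]
  have hx1e : x 1 = x1 := rfl
  have hx2e : x 2 = x2 := rfl
  have hx3e : x 3 = y 3 := rfl
  -- bracket with x1
  have hbr1 : ∀ i, 2 ≤ i → ⁅x 1, x i⁆ = x (i + 1) := by
    intro i hi
    rcases eq_or_lt_of_le hi with h2 | h3
    · rw [← h2, hx1e, hx2e, hx2def, lie_sub, lie_smul, lie_self, smul_zero, sub_zero, ← hy3]
      exact (hxy 3 (by omega)).symm
    · rw [hx1e, hxy i (by omega), hxy (i + 1) (by omega)]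
      exact (hysucc i (by omega)).symm
  -- spanning
  have hspan : Submodule.span ℂ (Set.range fun i : Fin n => x (i.1 + 1)) = ⊤ := by
    refine le_antisymm le_top ?_
    have hmemS : ∀ k, 1 ≤ k → k ≤ n →
        x k ∈ Submodule.span ℂ (Set.range fun i : Fin n => x (i.1 + 1)) := by
      intro k h1 h2
      exact Submodule.subset_span ⟨⟨k - 1, by omega⟩, congrArg x (show k - 1 + 1 = k by omega)⟩
    have hyS : ∀ k, 3 ≤ k → k ≤ n →
        y k ∈ Submodule.span ℂ (Set.range fun i : Fin n => x (i.1 + 1)) := by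
      intro k h1 h2
      rw [← hxy k (by omega)]
      exact hmemS k (by omega) h2
    rw [htop]
    refine sup_le ?_ (sup_le ?_ ?_)
    · rw [Submodule.span_singleton_le_iff_mem, ← hx1e]
      exact hmemS 1 (by omega) (by omega)
    · rw [Submodule.span_singleton_le_iff_mem,
        show x20 = x2 + cc 0 • x1 by rw [hx2def]; abel, ← hx1e, ← hx2e]
      exact Submodule.add_mem _ (hmemS 2 (by omega) (by omega))
        (Submodule.smul_mem _ _ (hmemS 1 (by omega) (by omega)))
    · rw [hH 0]
      refine sup_le ?_ (hC2span.trans (Submodule.span_le.mpr ?_))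
      · rw [Submodule.span_singleton_le_iff_mem]
        exact hyS 3 (by omega) (by omega)
      · rintro _ ⟨i, rfl⟩
        exact hyS (i.1 + 4) (by omega) (by omega)
  have hlin : LinearIndependent ℂ (fun i : Fin n => x (i.1 + 1)) := by
    refine linearIndependent_of_top_le_span_of_card_eq_finrank (ge_of_eq hspan) ?_
    rw [Fintype.card_fin, hfil.1]
  -- main bracket computation with x2
  have hyn1 : y (n + 1) = 0 := by
    have h1 : y (n + 1) ∈ C (n - 1) := by
      have := hymem (n - 2)
      rw [hyidx (n + 1) (n - 2 + 3) (by omega)]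
      rw [show n - 2 + 1 = n - 1 by omega] at this
      exact this
    rw [hCbot (n - 1) le_rfl] at h1
    exact (LieSubmodule.mem_bot _).mp h1
  have hx2x1 : ⁅x2, x1⁆ = -y 3 := by
    rw [hx2def, sub_lie, smul_lie, lie_self, smul_zero, sub_zero, ← lie_skew, hy3]
  have key : ∀ i, 3 ≤ i → i ≤ n - 2 →
      ⁅x2, y i⁆ = ∑ r ∈ Finset.range (n - i - 1), lam r • y (i + 2 + r) := by
    intro i hi
    induction i, hi using Nat.le_induction with
    | base =>
      intro _
      have e1 : ⁅x2, y 3⁆ = (∑ j ∈ Finset.range (n - 3), cc j • y (j + 4)) - cc 0 • y 4 := by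
        rw [hx2def, sub_lie, hccsum, smul_lie, show y 4 = ⁅x1, y 3⁆ from hysucc 3 (by omega)]
      rw [e1, show n - 3 = (n - 4) + 1 by omega, Finset.sum_range_succ']
      rw [show (0 : ℕ) + 4 = 4 from rfl, add_sub_cancel_right,
        show n - 4 + 1 - 1 = n - 4 by omega]
      refine Finset.sum_congr rfl fun r _ => ?_
      rw [hyidx (r + 1 + 4) (3 + 2 + r) (by omega)]
    | succ i hi3 ih =>
      intro hin
      rw [hysucc i (by omega), leibniz_lie]
      have hz : ⁅⁅x2, x1⁆, y i⁆ = 0 := by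
        rw [hx2x1]
        exact habD _ _ ((C 1).neg_mem (hymemC1 3 le_rfl)) (hymemC1 i (by omega))
      rw [hz, zero_add, ih (by omega)]
      have e2 : ⁅x1, ∑ r ∈ Finset.range (n - i - 1), lam r • y (i + 2 + r)⁆
          = ∑ r ∈ Finset.range (n - i - 1), lam r • y (i + 3 + r) := by
        rw [show ⁅x1, ∑ r ∈ Finset.range (n - i - 1), lam r • y (i + 2 + r)⁆
            = ∑ r ∈ Finset.range (n - i - 1), ⁅x1, lam r • y (i + 2 + r)⁆ from
          map_sum (LieAlgebra.ad ℂ L x1) _ _]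
        refine Finset.sum_congr rfl fun r _ => ?_
        rw [lie_smul, ← hysucc (i + 2 + r) (by omega)]
        exact congrArg _ (hyidx _ _ (by omega))
      rw [e2, show n - i - 1 = (n - i - 2) + 1 by omega, Finset.sum_range_succ,
        hyidx (i + 3 + (n - i - 2)) (n + 1) (by omega), hyn1, smul_zero, add_zero,
        show n - (i + 1) - 1 = n - i - 2 by omega]
  refine ⟨x, lam, hlin, hspan, fun i h1 _ => hbr1 i h1, ?_, ?_⟩
  · intro i j hi hij hjn
    rw [hxy i (by omega), hxy j (by omega)]
    exact habD _ _ (hymemC1 i hi) (hymemC1 j (by omega))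
  · intro i h3 h2
    rw [hx2e, hxy i (by omega), key i h3 h2]
    refine Finset.sum_congr rfl fun r _ => ?_
    rw [hxy (i + 2 + r) (by omega)]
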